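/- Discrete Green's representation formula: Let k ∈ ℂ and let 𝒢 : ℤ² → ℂ satisfy (Δ_d + k²)𝒢(x) = δ_{x,0} for all x ∈ ℤ². Let R ⊂ ℤ² be a finite region. Then for every function u : R → ℂ and every point x ∈ R̊, u(x) = Σ_{j=1}^{6} Σ_{y∈(∂R)_j} ( u(y)·(𝒢(x−y) − 𝒢(x−y+e_j)) − 𝒢(x−y)·(u(y) − u(y−e_j)) ) + Σ_{y∈R̊} 𝒢(x−y)·(Δ_d + k²)u(y). -/

import Mathlib

open Finset

/-- The six neighbour directions `e₁, e₂, e₃ = e₁ − e₂, e₄ = −e₁, e₅ = −e₂, e₆ = −e₃`. -/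
def dir : Fin 6 → ℤ × ℤ := ![(1, 0), (0, 1), (1, -1), (-1, 0), (0, -1), (-1, 1)]

/-- The 7-point discrete Laplacian of the triangular lattice on `ℤ²`:
`Δ_d u(x) = Σ_{j=1}^{6} u(x + e_j) − 6u(x)`. -/
noncomputable def discreteLaplacian (u : ℤ × ℤ → ℂ) (x : ℤ × ℤ) : ℂ :=
  (∑ j : Fin 6, u (x + dir j)) - 6 * u x

lemma dir_add_three : ∀ j : Fin 6, dir (j + 3) = -dir j := by decide

/-- Discrete Green's representation formula on a finite region `R = R̊ ∪ ∂R`. -/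
theorem discrete_green_representation
    (k : ℂ) (G : ℤ × ℤ → ℂ)
    (hG : ∀ x : ℤ × ℤ, discreteLaplacian G x + k ^ 2 * G x = if x = (0, 0) then 1 else 0)
    (Rint Rbd : Finset (ℤ × ℤ))
    (hdisj : Disjoint Rint Rbd)
    (hRint : Rint.Nonempty) (hRbd : Rbd.Nonempty)
    (hinterior : ∀ x ∈ Rint, ∀ j : Fin 6, x + dir j ∈ Rint ∪ Rbd)
    (hboundary : ∀ y ∈ Rbd, ∃ j : Fin 6, y - dir j ∈ Rint)
    (u : ℤ × ℤ → ℂ) :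
    ∀ x ∈ Rint,
      u x =
        (∑ j : Fin 6, ∑ y ∈ Rbd.filter (fun y => y - dir j ∈ Rint),
          (u y * (G (x - y) - G (x - y + dir j)) - G (x - y) * (u y - u (y - dir j)))) +
        ∑ y ∈ Rint, G (x - y) * (discreteLaplacian u y + k ^ 2 * u y) := by
  intro x hx
  have hσ := dir_add_three
  -- the delta property of G, viewed from x
  have hdelta : ∀ y : ℤ × ℤ,
      (∑ j : Fin 6, G (x - y - dir j)) - 6 * G (x - y) + k ^ 2 * G (x - y)
        = if y = x then 1 else 0 := by
    intro y
    have h1 : (∑ j : Fin 6, G (x - y - dir j)) = ∑ j : Fin 6, G ((x - y) + dir j) := by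
      refine Fintype.sum_equiv (Equiv.addRight 3) _ _ fun j => ?_
      have : ((Equiv.addRight (3 : Fin 6)) j) = j + 3 := rfl
      rw [this, hσ j, ← sub_eq_add_neg]
    have h2 : (∑ j : Fin 6, G ((x - y) + dir j)) - 6 * G (x - y) + k ^ 2 * G (x - y)
        = if x - y = ((0 : ℤ), (0 : ℤ)) then 1 else 0 := hG (x - y)
    have h3 : (x - y = ((0 : ℤ), (0 : ℤ))) ↔ y = x := by
      rw [show ((0, 0) : ℤ × ℤ) = 0 from rfl, sub_eq_zero, eq_comm]
    rw [h1, h2]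
    rcases eq_or_ne y x with h | h
    · simp [h]; rfl
    · rw [if_neg (fun hc : x - y = (0,0) => h (h3.mp hc)), if_neg h]
  -- rewrite u x as a delta-sum over Rint
  have hx' : u x = ∑ y ∈ Rint, u y *
      ((∑ j : Fin 6, G (x - y - dir j)) - 6 * G (x - y) + k ^ 2 * G (x - y)) := by
    simp_rw [hdelta, mul_ite, mul_one, mul_zero, Finset.sum_ite_eq' Rint x, hx, if_true]
  -- pointwise Green's second identity on the lattice
  have hpoint : ∀ y : ℤ × ℤ,
      G (x - y) * (discreteLaplacian u y + k ^ 2 * u y)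
        - u y * ((∑ j : Fin 6, G (x - y - dir j)) - 6 * G (x - y) + k ^ 2 * G (x - y))
      = ∑ j : Fin 6, (G (x - y) * u (y + dir j) - u y * G (x - y - dir j)) := by
    intro y
    rw [discreteLaplacian, Finset.sum_sub_distrib, ← Finset.mul_sum, ← Finset.mul_sum]
    ring
  have hSsub : (∑ y ∈ Rint, G (x - y) * (discreteLaplacian u y + k ^ 2 * u y)) - u x
      = ∑ j : Fin 6, ∑ y ∈ Rint, (G (x - y) * u (y + dir j) - u y * G (x - y - dir j)) := by
    rw [hx', ← Finset.sum_sub_distrib]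
    rw [Finset.sum_congr rfl fun y _ => hpoint y]
    exact Finset.sum_comm
  -- flip the direction in the G-derivative sum
  have hflip : ∑ j : Fin 6, ∑ y ∈ Rint, u y * G (x - y - dir j)
      = ∑ j : Fin 6, ∑ y ∈ Rint, u y * G (x - y + dir j) := by
    refine Fintype.sum_equiv (Equiv.addRight 3) _ _ fun j => ?_
    have h : ((Equiv.addRight (3 : Fin 6)) j) = j + 3 := rfl
    rw [h]
    refine Finset.sum_congr rfl fun y _ => ?_
    rw [hσ j, ← sub_eq_add_neg]
  -- rewrite the first sum over the shifted set
  have hA : ∀ j : Fin 6, ∑ y ∈ Rint, G (x - y) * u (y + dir j)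
      = ∑ z ∈ Rint.image (· + dir j), u z * G (x - z + dir j) := by
    intro j
    rw [Finset.sum_image (fun a _ b _ h => by exact add_right_cancel h)]
    refine Finset.sum_congr rfl fun y _ => ?_
    rw [show x - (y + dir j) + dir j = x - y by ring, mul_comm]
  -- identify the two difference sets
  have himg1 : ∀ j : Fin 6, (Rint.image (· + dir j)) \ Rint
      = Rbd.filter (fun z => z - dir j ∈ Rint) := by
    intro j
    ext z
    simp only [Finset.mem_sdiff, Finset.mem_image, Finset.mem_filter]
    constructor
    · rintro ⟨⟨y, hy, rfl⟩, hz⟩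
      have h1 := hinterior y hy j
      rw [Finset.mem_union] at h1
      refine ⟨h1.resolve_left hz, ?_⟩
      rwa [show y + dir j - dir j = y by ring]
    · rintro ⟨hzb, hzi⟩
      exact ⟨⟨z - dir j, hzi, by ring⟩, fun hz => Finset.disjoint_left.mp hdisj hz hzb⟩
  have himg2 : ∀ j : Fin 6, Rint \ (Rint.image (· + dir j))
      = Rint.filter (fun z => z - dir j ∈ Rbd) := by
    intro j
    ext z
    simp only [Finset.mem_sdiff, Finset.mem_image, Finset.mem_filter]
    constructor
    · rintro ⟨hz, hni⟩
      refine ⟨hz, ?_⟩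
      have h1 := hinterior z hz (j + 3)
      rw [hσ j, ← sub_eq_add_neg, Finset.mem_union] at h1
      refine h1.resolve_left fun hmem => hni ⟨z - dir j, hmem, by ring⟩
    · rintro ⟨hz, hzb⟩
      refine ⟨hz, ?_⟩
      rintro ⟨a, ha, rfl⟩
      rw [show a + dir j - dir j = a by ring] at hzb
      exact Finset.disjoint_left.mp hdisj ha hzb
  -- the key per-direction identity
  have hkey : ∀ j : Fin 6,
      (∑ y ∈ Rint, G (x - y) * u (y + dir j)) - ∑ y ∈ Rint, u y * G (x - y + dir j)
      = (∑ z ∈ Rbd.filter (fun z => z - dir j ∈ Rint), u z * G (x - z + dir j))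
        - ∑ z ∈ Rint.filter (fun z => z - dir j ∈ Rbd), u z * G (x - z + dir j) := by
    intro j
    rw [hA j, ← himg1 j, ← himg2 j, Finset.sum_sdiff_sub_sum_sdiff]
  -- shift the inner boundary term to the boundary
  have hshift : ∀ j : Fin 6,
      ∑ z ∈ Rint.filter (fun z => z - dir j ∈ Rbd), u z * G (x - z + dir j)
      = ∑ w ∈ Rbd.filter (fun w => w + dir j ∈ Rint), u (w + dir j) * G (x - w) := by
    intro j
    refine Finset.sum_nbij' (fun z => z - dir j) (fun w => w + dir j) ?_ ?_ ?_ ?_ ?_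
    · intro a ha
      rw [Finset.mem_filter] at ha ⊢
      exact ⟨ha.2, by rw [show a - dir j + dir j = a by ring]; exact ha.1⟩
    · intro a ha
      rw [Finset.mem_filter] at ha ⊢
      exact ⟨ha.2, by rw [show a + dir j - dir j = a by ring]; exact ha.1⟩
    · intro a _; ring
    · intro a _; ring
    · intro a _
      rw [show a - dir j + dir j = a by ring, show x - (a - dir j) = x - a + dir j by ring]
  have hflip2 : ∑ j : Fin 6, ∑ w ∈ Rbd.filter (fun w => w + dir j ∈ Rint), u (w + dir j) * G (x - w)
      = ∑ j : Fin 6, ∑ y ∈ Rbd.filter (fun y => y - dir j ∈ Rint), u (y - dir j) * G (x - y) := by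
    refine Fintype.sum_equiv (Equiv.addRight 3) _ _ fun j => ?_
    have h : ((Equiv.addRight (3 : Fin 6)) j) = j + 3 := rfl
    rw [h]
    have hpred : ∀ y : ℤ × ℤ, y - dir (j + 3) = y + dir j := by
      intro y; rw [hσ j, sub_neg_eq_add]
    refine Finset.sum_congr ?_ fun y _ => ?_
    · apply Finset.filter_congr; intro y _; simp [hpred y]
    · rw [hpred y]
  -- rewrite the target boundary sum
  have hB : (∑ j : Fin 6, ∑ y ∈ Rbd.filter (fun y => y - dir j ∈ Rint),
        (u y * (G (x - y) - G (x - y + dir j)) - G (x - y) * (u y - u (y - dir j))))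
      = (∑ j : Fin 6, ∑ y ∈ Rbd.filter (fun y => y - dir j ∈ Rint), u (y - dir j) * G (x - y))
        - ∑ j : Fin 6, ∑ y ∈ Rbd.filter (fun y => y - dir j ∈ Rint), u y * G (x - y + dir j) := by
    rw [← Finset.sum_sub_distrib]
    refine Finset.sum_congr rfl fun j _ => ?_
    rw [← Finset.sum_sub_distrib]
    exact Finset.sum_congr rfl fun y _ => by ring
  -- assemble everything
  have hmain : (∑ y ∈ Rint, G (x - y) * (discreteLaplacian u y + k ^ 2 * u y)) - u x
      = (∑ j : Fin 6, ∑ y ∈ Rbd.filter (fun y => y - dir j ∈ Rint), u y * G (x - y + dir j))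
        - ∑ j : Fin 6, ∑ y ∈ Rbd.filter (fun y => y - dir j ∈ Rint), u (y - dir j) * G (x - y) := by
    rw [hSsub]
    calc ∑ j : Fin 6, ∑ y ∈ Rint, (G (x - y) * u (y + dir j) - u y * G (x - y - dir j))
        = (∑ j : Fin 6, ∑ y ∈ Rint, G (x - y) * u (y + dir j))
            - ∑ j : Fin 6, ∑ y ∈ Rint, u y * G (x - y - dir j) := by
          simp_rw [Finset.sum_sub_distrib]
      _ = (∑ j : Fin 6, ∑ y ∈ Rint, G (x - y) * u (y + dir j))
            - ∑ j : Fin 6, ∑ y ∈ Rint, u y * G (x - y + dir j) := by rw [hflip]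
      _ = ∑ j : Fin 6, ((∑ y ∈ Rint, G (x - y) * u (y + dir j))
            - ∑ y ∈ Rint, u y * G (x - y + dir j)) := by
          simp_rw [Finset.sum_sub_distrib]
      _ = ∑ j : Fin 6, ((∑ z ∈ Rbd.filter (fun z => z - dir j ∈ Rint), u z * G (x - z + dir j))
            - ∑ w ∈ Rbd.filter (fun w => w + dir j ∈ Rint), u (w + dir j) * G (x - w)) := by
          exact Finset.sum_congr rfl fun j _ => by rw [hkey j, hshift j]
      _ = (∑ j : Fin 6, ∑ y ∈ Rbd.filter (fun y => y - dir j ∈ Rint), u y * G (x - y + dir j))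
            - ∑ j : Fin 6, ∑ y ∈ Rbd.filter (fun y => y - dir j ∈ Rint), u (y - dir j) * G (x - y) := by
          rw [Finset.sum_sub_distrib, hflip2]
  rw [hB]
  linear_combination -hmain
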